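/- For every real number x with |x| < 1, the power series identity ∑_{k=0}^∞ (4^{k+1} · ((k+1)!)² / (2k+1)!) · x^{2k+1} = ( 3x·√(1−x²) + (2x²+1)·arcsin(x) ) / (1−x²)^{5/2} holds (in particular the series on the left converges). -/

import Mathlib

open Real

noncomputable def bb (k : ℕ) : ℝ :=
  4 ^ k * (Nat.factorial k : ℝ) ^ 2 / (Nat.factorial (2 * k + 1) : ℝ)

lemma fact_cast_pos (n : ℕ) : (0:ℝ) < (Nat.factorial n : ℝ) :=
  Nat.cast_pos.mpr (Nat.factorial_pos n)

lemma bb_pos (k : ℕ) : 0 < bb k := by unfold bb; positivity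

lemma bb_zero : bb 0 = 1 := by simp [bb, Nat.factorial]

lemma bb_rec (k : ℕ) : (2*(k:ℝ)+3) * bb (k+1) = (2*(k:ℝ)+2) * bb k := by
  unfold bb
  have h1 : 2 * (k+1) + 1 = (2*k+2) + 1 := by ring
  rw [h1, Nat.factorial_succ, Nat.factorial_succ, Nat.factorial_succ]
  have h2 := (fact_cast_pos (2*k+1)).ne'
  have h3 := (fact_cast_pos k).ne'
  push_cast
  field_simp
  ring

lemma bb_le_one (k : ℕ) : bb k ≤ 1 := by
  induction k with
  | zero => rw [bb_zero]
  | succ n ih =>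
    have h := bb_rec n
    have h2 := bb_pos n
    nlinarith [bb_pos (n+1)]

lemma sq_sum_aux {t : ℝ} (ht : |t| < 1) :
    Summable fun k : ℕ => ((k:ℝ)+1)^2 * t^k := by
  have hn : ‖t‖ < 1 := by rwa [Real.norm_eq_abs]
  have h1 : Summable fun k : ℕ => ((k:ℝ))^2 * t^k := by
    simpa using summable_pow_mul_geometric_of_norm_lt_one 2 hn
  have h2 : Summable fun k : ℕ => ((k:ℝ)) * t^k := by
    simpa using summable_pow_mul_geometric_of_norm_lt_one 1 hn
  have h3 : Summable fun k : ℕ => t^k := summable_geometric_of_norm_lt_one hn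
  exact Summable.congr ((h1.add (h2.mul_left 2)).add h3) (fun k => by ring)

lemma summable_of_le_aux {y : ℝ} (hy : |y| < 1) {f : ℕ → ℝ} {C : ℝ}
    (hf : ∀ k, ‖f k‖ ≤ C * (((k:ℝ)+1)^2 * (y^2)^k)) : Summable f := by
  have ht : |y^2| < 1 := by
    rw [abs_of_nonneg (sq_nonneg y)]
    nlinarith [abs_nonneg y, sq_abs y]
  exact Summable.of_norm_bounded ((sq_sum_aux ht).mul_left C) hf

lemma term_bound {y : ℝ} (hy : |y| < 1) {a C : ℝ} (ha : 0 ≤ a) (k m : ℕ)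
    (hm : 2*k ≤ m) (haC : a ≤ C * ((k:ℝ)+1)^2) :
    ‖a * bb k * y ^ m‖ ≤ C * (((k:ℝ)+1)^2 * (y^2)^k) := by
  have h1 : |y| ^ m ≤ (y^2)^k := by
    calc |y|^m ≤ |y|^(2*k) := pow_le_pow_of_le_one (abs_nonneg y) hy.le hm
    _ = (y^2)^k := by rw [pow_mul, sq_abs]
  rw [norm_mul, norm_mul, Real.norm_eq_abs, Real.norm_eq_abs, Real.norm_eq_abs,
    abs_of_nonneg ha, abs_of_nonneg (bb_pos k).le, abs_pow]
  have h2 : a * bb k * |y|^m ≤ a * 1 * (y^2)^k := by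
    apply mul_le_mul (mul_le_mul le_rfl (bb_le_one k) (bb_pos k).le ha) h1
      (pow_nonneg (abs_nonneg y) m) (mul_nonneg ha zero_le_one)
  have h3 : a * (y^2)^k ≤ (C * ((k:ℝ)+1)^2) * (y^2)^k :=
    mul_le_mul_of_nonneg_right haC (pow_nonneg (sq_nonneg y) k)
  nlinarith

noncomputable def d1 (k : ℕ) (y : ℝ) : ℝ := (2*(k:ℝ)+1) * bb k * y^(2*k)
noncomputable def d2 (k : ℕ) (y : ℝ) : ℝ :=
  (2*(k:ℝ)+1) * bb k * (((2*k : ℕ) : ℝ) * y^(2*k-1))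
noncomputable def G (y : ℝ) : ℝ := ∑' k : ℕ, bb k * y^(2*k+1)

lemma cc_eq (k : ℕ) :
    (4:ℝ)^(k+1) * ((Nat.factorial (k+1) : ℝ))^2 / (Nat.factorial (2*k+1) : ℝ)
      = (4*((k:ℝ)+1)^2) * bb k := by
  unfold bb
  rw [Nat.factorial_succ]
  have h2 := (fact_cast_pos (2*k+1)).ne'
  push_cast
  field_simp
  ring

lemma F_eq_d2 (k : ℕ) (x : ℝ) :
    (4:ℝ)^(k+1) * ((Nat.factorial (k+1) : ℝ))^2 / (Nat.factorial (2*k+1) : ℝ) * x^(2*k+1)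
      = d2 (k+1) x := by
  have h : 2*(k+1)-1 = 2*k+1 := by omega
  rw [cc_eq]
  simp only [d2, h]
  push_cast
  linear_combination (-(2*(k:ℝ)+2) * x^(2*k+1)) * bb_rec k

lemma sumG {y : ℝ} (hy : |y| < 1) : Summable fun k : ℕ => bb k * y^(2*k+1) := by
  apply summable_of_le_aux hy (C := 1)
  intro k
  rw [show bb k * y^(2*k+1) = 1 * bb k * y^(2*k+1) by ring]
  exact term_bound hy zero_le_one k (2*k+1) (by omega) (by nlinarith [Nat.cast_nonneg (α := ℝ) k])

lemma sumd1 {y : ℝ} (hy : |y| < 1) : Summable fun k : ℕ => d1 k y := by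
  apply summable_of_le_aux hy (C := 3)
  intro k
  exact term_bound hy (by positivity) k (2*k) le_rfl (by nlinarith [Nat.cast_nonneg (α := ℝ) k])

lemma sumGsh {y : ℝ} (hy : |y| < 1) : Summable fun k : ℕ => bb k * y^(2*k+2) := by
  apply summable_of_le_aux hy (C := 1)
  intro k
  rw [show bb k * y^(2*k+2) = 1 * bb k * y^(2*k+2) by ring]
  exact term_bound hy zero_le_one k (2*k+2) (by omega) (by nlinarith [Nat.cast_nonneg (α := ℝ) k])

lemma sumd1sh {y : ℝ} (hy : |y| < 1) :
    Summable fun k : ℕ => (2*(k:ℝ)+1) * bb k * y^(2*k+2) := by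
  apply summable_of_le_aux hy (C := 3)
  intro k
  exact term_bound hy (by positivity) k (2*k+2) (by omega)
    (by nlinarith [Nat.cast_nonneg (α := ℝ) k])

lemma sumF {x : ℝ} (hx : |x| < 1) :
    Summable fun k : ℕ => (4:ℝ)^(k+1) * ((Nat.factorial (k+1) : ℝ))^2 /
      (Nat.factorial (2*k+1) : ℝ) * x^(2*k+1) := by
  apply summable_of_le_aux hx (C := 4)
  intro k
  rw [cc_eq]
  exact term_bound hx (by positivity) k (2*k+1) (by omega) le_rfl

lemma sumd2 {y : ℝ} (hy : |y| < 1) : Summable fun k : ℕ => d2 k y := by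
  rw [← summable_nat_add_iff 1]
  exact (sumF hy).congr (fun k => F_eq_d2 k y)

lemma G_hasDeriv {x : ℝ} (hx : |x| < 1) : HasDerivAt G (∑' k, d1 k x) x := by
  set r : ℝ := (1 + |x|)/2 with hr
  have hxr : |x| < r := by simp only [hr]; linarith
  have hr0 : 0 < r := lt_of_le_of_lt (abs_nonneg x) hxr
  have hr1 : r < 1 := by simp only [hr]; linarith
  have hrabs : |r| < 1 := by rwa [abs_of_pos hr0]
  have h := hasDerivAt_tsum_of_isPreconnected (u := fun k => d1 k r)
    (t := Metric.ball (0:ℝ) r) (g := fun k z => bb k * z^(2*k+1)) (g' := d1)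
    (sumd1 hrabs) Metric.isOpen_ball (convex_ball _ _).isPreconnected
    (fun k y _ => by
      have h := (hasDerivAt_pow (2*k+1) y).const_mul (bb k)
      refine h.congr_deriv (Eq.symm ?_)
      simp only [d1, Nat.add_sub_cancel]
      push_cast
      ring)
    (fun k y hyt => by
      have hy : |y| ≤ r := by
        have := mem_ball_zero_iff.mp hyt
        rw [Real.norm_eq_abs] at this
        exact this.le
      simp only [d1, Real.norm_eq_abs, abs_mul, abs_pow,
        abs_of_nonneg (by positivity : (0:ℝ) ≤ 2*(k:ℝ)+1),
        abs_of_nonneg (bb_pos k).le]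
      exact mul_le_mul_of_nonneg_left (pow_le_pow_left₀ (abs_nonneg y) hy _)
        (mul_nonneg (by positivity) (bb_pos k).le))
    (mem_ball_zero_iff.mpr (by rwa [Real.norm_eq_abs])) (sumG hx)
    (mem_ball_zero_iff.mpr (by rwa [Real.norm_eq_abs]))
  exact h

lemma G1_hasDeriv {x : ℝ} (hx : |x| < 1) :
    HasDerivAt (fun y => ∑' k, d1 k y) (∑' k, d2 k x) x := by
  set r : ℝ := (1 + |x|)/2 with hr
  have hxr : |x| < r := by simp only [hr]; linarith
  have hr0 : 0 < r := lt_of_le_of_lt (abs_nonneg x) hxr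
  have hr1 : r < 1 := by simp only [hr]; linarith
  have hrabs : |r| < 1 := by rwa [abs_of_pos hr0]
  exact hasDerivAt_tsum_of_isPreconnected (u := fun k => d2 k r)
    (t := Metric.ball (0:ℝ) r) (g := d1) (g' := d2)
    (sumd2 hrabs) Metric.isOpen_ball (convex_ball _ _).isPreconnected
    (fun k y _ => by
      have h := (hasDerivAt_pow (2*k) y).const_mul ((2*(k:ℝ)+1) * bb k)
      simp only [d1, d2]
      exact h)
    (fun k y hyt => by
      have hy : |y| ≤ r := by
        have := mem_ball_zero_iff.mp hyt
        rw [Real.norm_eq_abs] at this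
        exact this.le
      simp only [d2, Real.norm_eq_abs, abs_mul, abs_pow,
        abs_of_nonneg (by positivity : (0:ℝ) ≤ 2*(k:ℝ)+1),
        abs_of_nonneg (bb_pos k).le,
        abs_of_nonneg (by positivity : (0:ℝ) ≤ ((2*k : ℕ) : ℝ))]
      exact mul_le_mul_of_nonneg_left (mul_le_mul_of_nonneg_left
        (pow_le_pow_left₀ (abs_nonneg y) hy _) (by positivity))
        (mul_nonneg (by positivity) (bb_pos k).le))
    (mem_ball_zero_iff.mpr (by rwa [Real.norm_eq_abs])) (sumd1 hx)
    (mem_ball_zero_iff.mpr (by rwa [Real.norm_eq_abs]))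

lemma ode {y : ℝ} (hy : |y| < 1) :
    (1 - y^2) * (∑' k, d1 k y) - y * G y = 1 := by
  have hP : (∑' k, d1 k y) = 1 +
      ((∑' k : ℕ, (2*(k:ℝ)+1) * bb k * y^(2*k+2)) + (∑' k, bb k * y^(2*k+2))) := by
    rw [Summable.tsum_eq_zero_add (sumd1 hy)]
    rw [← Summable.tsum_add (sumd1sh hy) (sumGsh hy)]
    congr 1
    · simp [d1, bb_zero]
    · apply tsum_congr
      intro k
      simp only [d1]
      rw [show 2*(k+1) = 2*k+2 from by ring]
      push_cast
      linear_combination (y^(2*k+2)) * bb_rec k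
  have hyQ : y * G y = ∑' k, bb k * y^(2*k+2) := by
    unfold G
    rw [← tsum_mul_left]
    apply tsum_congr
    intro k
    ring
  have hy2P : y^2 * (∑' k, d1 k y) = ∑' k : ℕ, (2*(k:ℝ)+1) * bb k * y^(2*k+2) := by
    rw [← tsum_mul_left]
    apply tsum_congr
    intro k
    simp only [d1]
    ring
  calc (1 - y^2) * (∑' k, d1 k y) - y * G y
      = (∑' k, d1 k y) - y^2 * (∑' k, d1 k y) - y * G y := by ring
    _ = 1 := by rw [hy2P, hyQ, hP]; ring

lemma H_deriv {y : ℝ} (hy : |y| < 1) :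
    HasDerivAt (fun z => Real.sqrt (1-z^2) * G z - Real.arcsin z) 0 y := by
  obtain ⟨hy1', hy1⟩ := abs_lt.mp hy
  have h1pos : 0 < 1 - y^2 := by nlinarith [sq_abs y]
  have s0 : Real.sqrt (1-y^2) ≠ 0 := (Real.sqrt_pos.mpr h1pos).ne'
  have hs2 : Real.sqrt (1-y^2)^2 = 1-y^2 := Real.sq_sqrt h1pos.le
  have hq : HasDerivAt (fun z : ℝ => 1 - z^2) (-(2*y)) y := by
    simpa using (hasDerivAt_pow 2 y).const_sub 1
  have hsq : HasDerivAt (fun z => Real.sqrt (1-z^2)) (-y / Real.sqrt (1-y^2)) y := by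
    have h := (Real.hasDerivAt_sqrt h1pos.ne').comp y hq
    refine h.congr_deriv (Eq.symm ?_)
    field_simp
  have ha : HasDerivAt Real.arcsin (1 / Real.sqrt (1-y^2)) y :=
    Real.hasDerivAt_arcsin (by linarith) (by linarith)
  have hG := G_hasDeriv hy
  have hode := ode hy
  have key : (-y / Real.sqrt (1-y^2)) * G y + Real.sqrt (1-y^2) * (∑' k, d1 k y)
      - 1 / Real.sqrt (1-y^2) = 0 := by
    field_simp
    linear_combination hode + (∑' k : ℕ, d1 k y) * hs2
  have h := (hsq.mul hG).sub ha
  rwa [key] at h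

lemma G_closed {x : ℝ} (hx : |x| < 1) :
    Real.sqrt (1 - x^2) * G x = Real.arcsin x := by
  have hmem : x ∈ Set.Ioo (-1:ℝ) 1 := by
    rcases abs_lt.mp hx with ⟨h1, h2⟩; exact ⟨h1, h2⟩
  have h0mem : (0:ℝ) ∈ Set.Ioo (-1:ℝ) 1 := by norm_num
  have hmvt := (convex_Ioo (-1:ℝ) 1).norm_image_sub_le_of_norm_hasDerivWithin_le
    (f := fun z => Real.sqrt (1-z^2) * G z - Real.arcsin z) (f' := fun _ => (0:ℝ))
    (C := 0)
    (fun z hz => (H_deriv (abs_lt.mpr ⟨hz.1, hz.2⟩)).hasDerivWithinAt)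
    (fun z _ => by norm_num) h0mem hmem
  have hG0 : G 0 = 0 := by
    unfold G
    have : ∀ k : ℕ, bb k * (0:ℝ)^(2*k+1) = 0 := by
      intro k
      rw [zero_pow (by omega)]
      ring
    simp [this]
  simp only [hG0, Real.arcsin_zero, mul_zero, sub_zero, zero_mul, sub_self] at hmvt
  have h2 := norm_le_zero_iff.mp (by simpa using hmvt)
  linarith [sub_eq_zero.mp h2]

lemma psi_hasDeriv {x : ℝ} (hx : |x| < 1) :
    HasDerivAt (fun y => (1 + y * Real.arcsin y / Real.sqrt (1-y^2)) / (1-y^2))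
      ((3*x + (2*x^2+1) * Real.arcsin x / Real.sqrt (1-x^2)) / (1-x^2)^2) x := by
  obtain ⟨hx1', hx1⟩ := abs_lt.mp hx
  have h1pos : 0 < 1 - x^2 := by nlinarith [sq_abs x]
  have s0 : Real.sqrt (1-x^2) ≠ 0 := (Real.sqrt_pos.mpr h1pos).ne'
  have hq : HasDerivAt (fun z : ℝ => 1 - z^2) (-(2*x)) x := by
    simpa using (hasDerivAt_pow 2 x).const_sub 1
  have hsq : HasDerivAt (fun z => Real.sqrt (1-z^2)) (-x / Real.sqrt (1-x^2)) x := by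
    have h := (Real.hasDerivAt_sqrt h1pos.ne').comp x hq
    refine h.congr_deriv (Eq.symm ?_)
    field_simp
  have ha : HasDerivAt Real.arcsin (1 / Real.sqrt (1-x^2)) x :=
    Real.hasDerivAt_arcsin (by linarith) (by linarith)
  have hxa : HasDerivAt (fun y => y * Real.arcsin y)
      (1 * Real.arcsin x + x * (1/Real.sqrt (1-x^2))) x := (hasDerivAt_id x).mul ha
  have hdiv := hxa.div hsq s0
  have hnum := hdiv.const_add 1
  have hfull := hnum.div hq h1pos.ne'
  refine hfull.congr_deriv (Eq.symm ?_)
  simp only [Pi.div_apply]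
  set s := Real.sqrt (1-x^2) with hs
  have hs2 : s^2 = 1-x^2 := Real.sq_sqrt h1pos.le
  rw [← hs2]
  field_simp
  linear_combination (-Real.arcsin x) * hs2

theorem stmt_6 (x : ℝ) (hx : |x| < 1) :
    Summable (fun k : ℕ => (4 : ℝ) ^ (k + 1) * ((Nat.factorial (k + 1) : ℝ)) ^ 2 /
      (Nat.factorial (2 * k + 1) : ℝ) * x ^ (2 * k + 1)) ∧
    ∑' k : ℕ, (4 : ℝ) ^ (k + 1) * ((Nat.factorial (k + 1) : ℝ)) ^ 2 /
        (Nat.factorial (2 * k + 1) : ℝ) * x ^ (2 * k + 1) =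
      (3 * x * Real.sqrt (1 - x ^ 2) + (2 * x ^ 2 + 1) * Real.arcsin x) /
        (Real.sqrt (1 - x ^ 2)) ^ 5 := by
  obtain ⟨hx1', hx1⟩ := abs_lt.mp hx
  have h1pos : 0 < 1 - x^2 := by nlinarith [sq_abs x]
  have spos : 0 < Real.sqrt (1-x^2) := Real.sqrt_pos.mpr h1pos
  have s0 : Real.sqrt (1-x^2) ≠ 0 := spos.ne'
  refine ⟨sumF hx, ?_⟩
  have hmem : x ∈ Set.Ioo (-1:ℝ) 1 := ⟨hx1', hx1⟩
  have hψeq : ∀ y ∈ Set.Ioo (-1:ℝ) 1, (∑' k : ℕ, d1 k y)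
      = (1 + y * Real.arcsin y / Real.sqrt (1-y^2)) / (1-y^2) := by
    intro y hy
    have hy' : |y| < 1 := abs_lt.mpr ⟨hy.1, hy.2⟩
    have h1posy : 0 < 1 - y^2 := by nlinarith [sq_abs y, abs_nonneg y, hy']
    have s0y : Real.sqrt (1-y^2) ≠ 0 := (Real.sqrt_pos.mpr h1posy).ne'
    have hode := ode hy'
    have hGc := G_closed hy'
    rw [eq_div_iff h1posy.ne', ← hGc]
    field_simp
    linear_combination hode
  have hDψ : HasDerivAt (fun y => (1 + y * Real.arcsin y / Real.sqrt (1-y^2)) / (1-y^2))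
      (∑' k : ℕ, d2 k x) x := by
    apply (G1_hasDeriv hx).congr_of_eventuallyEq
    filter_upwards [isOpen_Ioo.mem_nhds hmem] with y hy
    exact (hψeq y hy).symm
  have huniq : (∑' k : ℕ, d2 k x)
      = (3*x + (2*x^2+1) * Real.arcsin x / Real.sqrt (1-x^2)) / (1-x^2)^2 :=
    hDψ.unique (psi_hasDeriv hx)
  have hshift : (∑' k : ℕ, (4 : ℝ) ^ (k + 1) * ((Nat.factorial (k + 1) : ℝ)) ^ 2 /
        (Nat.factorial (2 * k + 1) : ℝ) * x ^ (2 * k + 1)) = ∑' k : ℕ, d2 k x := by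
    rw [Summable.tsum_eq_zero_add (sumd2 hx)]
    have hd20 : d2 0 x = 0 := by simp [d2]
    rw [hd20, zero_add]
    exact tsum_congr (fun k => F_eq_d2 k x)
  rw [hshift, huniq]
  set s := Real.sqrt (1-x^2) with hs
  have hs2 : s^2 = 1-x^2 := Real.sq_sqrt h1pos.le
  rw [show (1:ℝ) - x^2 = s^2 from hs2.symm]
  rw [div_eq_div_iff (by positivity) (by positivity)]
  field_simp
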